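/- Let A and B be C*-algebras and suppose B admits no tracial states, so that the closed linear span of commutators [B,B] is all of B. Then for any a ≥ 0 in A and b, b' ∈ B, one has a ⊗ [b,b'] = [a^{1/2} ⊗ b, a^{1/2} ⊗ b'] in the algebraic tensor product A ⊗ B; consequently, for any algebra norm ‖·‖_α, the closed span of commutators of A ⊗^α B is all of A ⊗^α B. -/

import Mathlib

open scoped TensorProduct

/-- Let `A` and `B` be C*-algebras and suppose `B` admits no tracial states,
so that the closed span of commutators of `B` is all of `B`.  Then for `a ≥ 0` in `A`
with positive square root `s` (`0 ≤ s`, `s * s = a`) and `b, b' ∈ B` one has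
`a ⊗ [b,b'] = [s ⊗ b, s ⊗ b']` in `A ⊗ B`; consequently, for any algebra (cross) norm
`N` on `A ⊗ B`, the span of commutators is `N`-dense in `A ⊗ B`, i.e. the closed span of
commutators of `A ⊗^α B` is all of it. -/
theorem tmul_commutator_and_span_commutators_dense
    (A B : Type*)
    [NonUnitalNormedRing A] [StarRing A] [CStarRing A] [NormedSpace ℂ A]
    [IsScalarTower ℂ A A] [SMulCommClass ℂ A A] [StarModule ℂ A] [CompleteSpace A]
    [PartialOrder A] [StarOrderedRing A]
    [NonUnitalNormedRing B] [StarRing B] [CStarRing B] [NormedSpace ℂ B]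
    [IsScalarTower ℂ B B] [SMulCommClass ℂ B B] [StarModule ℂ B] [CompleteSpace B]
    (hB : closure (Submodule.span ℂ {z : B | ∃ x y : B, z = x * y - y * x} : Set B)
      = Set.univ)
    (N : A ⊗[ℂ] B → ℝ)
    (hN0 : ∀ x, N x = 0 ↔ x = 0)
    (hNadd : ∀ x y, N (x + y) ≤ N x + N y)
    (hNsmul : ∀ (c : ℂ) x, N (c • x) = ‖c‖ * N x)
    (hNmul : ∀ x y, N (x * y) ≤ N x * N y)
    (hNcross : ∀ (a : A) (b : B), N (a ⊗ₜ[ℂ] b) = ‖a‖ * ‖b‖) :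
    (∀ a : A, 0 ≤ a → ∀ s : A, 0 ≤ s → s * s = a → ∀ b b' : B,
      a ⊗ₜ[ℂ] (b * b' - b' * b)
        = (s ⊗ₜ[ℂ] b) * (s ⊗ₜ[ℂ] b') - (s ⊗ₜ[ℂ] b') * (s ⊗ₜ[ℂ] b)) ∧
    ∀ (x : A ⊗[ℂ] B) (ε : ℝ), 0 < ε →
      ∃ y ∈ Submodule.span ℂ {z : A ⊗[ℂ] B | ∃ u v : A ⊗[ℂ] B, z = u * v - v * u},
        N (x - y) < ε := by
  letI : NonUnitalCStarAlgebra A := { }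
  have part1 : ∀ a : A, 0 ≤ a → ∀ s : A, 0 ≤ s → s * s = a → ∀ b b' : B,
      a ⊗ₜ[ℂ] (b * b' - b' * b)
        = (s ⊗ₜ[ℂ] b) * (s ⊗ₜ[ℂ] b') - (s ⊗ₜ[ℂ] b') * (s ⊗ₜ[ℂ] b) := by
    intro a ha s hs hss b b'
    rw [Algebra.TensorProduct.tmul_mul_tmul, Algebra.TensorProduct.tmul_mul_tmul, hss,
      TensorProduct.tmul_sub]
  refine ⟨part1, ?_⟩
  set SB : Submodule ℂ B := Submodule.span ℂ {z : B | ∃ x y : B, z = x * y - y * x} with hSB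
  set S : Submodule ℂ (A ⊗[ℂ] B) :=
    Submodule.span ℂ {z : A ⊗[ℂ] B | ∃ u v : A ⊗[ℂ] B, z = u * v - v * u} with hS
  -- For nonnegative `a` and a commutator `z` in `B`, `a ⊗ z` is a commutator in `A ⊗ B`.
  have keypos : ∀ a : A, 0 ≤ a → ∀ z : B, (∃ x y : B, z = x * y - y * x) →
      a ⊗ₜ[ℂ] z ∈ S := by
    rintro a ha z ⟨x, y, rfl⟩
    exact Submodule.subset_span ⟨_, _,
      part1 a ha (CFC.sqrt a) (CFC.sqrt_nonneg a) (CFC.sqrt_mul_sqrt_self a ha) x y⟩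
  -- Extend to arbitrary `a` using the span of nonnegative elements.
  have keyall : ∀ (a : A) (z : B), (∃ x y : B, z = x * y - y * x) → a ⊗ₜ[ℂ] z ∈ S := by
    intro a z hz
    have ha : a ∈ Submodule.span ℂ {a : A | 0 ≤ a} := by
      rw [CStarAlgebra.span_nonneg]; trivial
    induction ha using Submodule.span_induction with
    | mem w hw => exact keypos w hw z hz
    | zero => simp only [TensorProduct.zero_tmul]; exact Submodule.zero_mem S
    | add u v hu hv ihu ihv =>
      rw [TensorProduct.add_tmul]; exact Submodule.add_mem S ihu ihv
    | smul c u hu ih =>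
      rw [← TensorProduct.smul_tmul']; exact Submodule.smul_mem S c ih
  -- Extend to arbitrary `z ∈ SB` by linearity in the second variable.
  have key : ∀ (a : A) (z : B), z ∈ SB → a ⊗ₜ[ℂ] z ∈ S := by
    intro a z hz
    induction hz using Submodule.span_induction with
    | mem w hw => exact keyall a w hw
    | zero => simp only [TensorProduct.tmul_zero]; exact Submodule.zero_mem S
    | add u v hu hv ihu ihv =>
      rw [TensorProduct.tmul_add]; exact Submodule.add_mem S ihu ihv
    | smul c u hu ih =>
      rw [TensorProduct.tmul_smul]; exact Submodule.smul_mem S c ih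
  -- Density
  have main : ∀ x : A ⊗[ℂ] B, ∀ ε : ℝ, 0 < ε → ∃ y ∈ S, N (x - y) < ε := by
    intro x
    induction x using TensorProduct.induction_on with
    | zero =>
      intro ε hε
      refine ⟨0, Submodule.zero_mem S, ?_⟩
      simpa [(hN0 0).mpr rfl] using hε
    | tmul a b =>
      intro ε hε
      have hb : b ∈ closure (SB : Set B) := by rw [hB]; trivial
      have hpos : 0 < ε / (‖a‖ + 1) := by positivity
      obtain ⟨c, hc, hdist⟩ := Metric.mem_closure_iff.mp hb _ hpos
      refine ⟨a ⊗ₜ[ℂ] c, key a c hc, ?_⟩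
      rw [← TensorProduct.tmul_sub, hNcross]
      rw [dist_eq_norm] at hdist
      have h1 : 0 < ‖a‖ + 1 := by positivity
      have h2 : ‖a‖ * ‖b - c‖ ≤ ‖a‖ * (ε / (‖a‖ + 1)) :=
        mul_le_mul_of_nonneg_left hdist.le (norm_nonneg a)
      have h3 : ‖a‖ * (ε / (‖a‖ + 1)) < (‖a‖ + 1) * (ε / (‖a‖ + 1)) := by
        apply mul_lt_mul_of_pos_right _ hpos
        linarith
      have h4 : (‖a‖ + 1) * (ε / (‖a‖ + 1)) = ε := by field_simp
      linarith
    | add u v ihu ihv =>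
      intro ε hε
      obtain ⟨y₁, hy₁, hN₁⟩ := ihu (ε / 2) (by positivity)
      obtain ⟨y₂, hy₂, hN₂⟩ := ihv (ε / 2) (by positivity)
      refine ⟨y₁ + y₂, Submodule.add_mem S hy₁ hy₂, ?_⟩
      have heq : u + v - (y₁ + y₂) = (u - y₁) + (v - y₂) := by abel
      rw [heq]
      calc N ((u - y₁) + (v - y₂)) ≤ N (u - y₁) + N (v - y₂) := hNadd _ _
        _ < ε / 2 + ε / 2 := add_lt_add hN₁ hN₂
        _ = ε := by ring
  exact main
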